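/- Let G be the topological group circle × ℝ, where circle is the multiplicative group of unit complex numbers, and let H be the subgroup of G generated by the single element (−1, π). Then the quotient topological group G / H is homeomorphic to circle × circle, i.e. to the 2-dimensional torus. -/

import Mathlib

/-- The element `-1` of the circle group. -/
noncomputable def negOneCircle : Circle :=
  ⟨(-1 : ℂ), by simp [Submonoid.unitSphere, Metric.mem_sphere]⟩

lemma coe_negOneCircle : (negOneCircle : ℂ) = -1 := rfl

lemma circle_exp_int_mul (n : ℤ) (x : ℝ) :
    Circle.exp (n * x) = Circle.exp x ^ n := by
  rw [← zsmul_eq_mul]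
  simpa using map_zsmul Circle.expHom n x

lemma circle_exp_pi : Circle.exp Real.pi = negOneCircle := by
  ext
  rw [Circle.coe_exp, coe_negOneCircle, Complex.exp_pi_mul_I]

lemma negOneCircle_inv : negOneCircle⁻¹ = negOneCircle := by
  ext
  push_cast [coe_negOneCircle]
  norm_num

/-- The covering homomorphism from the cylinder to the torus. -/
noncomputable def torusHom : Circle × Multiplicative ℝ →* Circle × Circle where
  toFun p := (p.1 * Circle.exp p.2.toAdd, Circle.exp (2 * p.2.toAdd))
  map_one' := by simp
  map_mul' a b := by
    ext
    · simp [Circle.exp_add, mul_mul_mul_comm]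
    · simp [mul_add, Circle.exp_add]

/-- Let `G` be the topological group `circle × ℝ` and let `H` be the subgroup
generated by the single element `(-1, π)`.  Then the quotient topological group `G / H` is
homeomorphic to `circle × circle`, i.e. to the 2-dimensional torus. -/
theorem stmt_4 :
    Nonempty
      ((Circle × Multiplicative ℝ) ⧸
          Subgroup.zpowers ((negOneCircle, Multiplicative.ofAdd Real.pi) :
            Circle × Multiplicative ℝ) ≃ₜ
        (Circle × Circle)) := by
  have hg : ∀ n : ℤ,
      ((negOneCircle, Multiplicative.ofAdd Real.pi) : Circle × Multiplicative ℝ) ^ n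
        = (negOneCircle ^ n, Multiplicative.ofAdd ((n : ℝ) * Real.pi)) := by
    intro n
    have h2 : (Multiplicative.ofAdd Real.pi) ^ n
        = Multiplicative.ofAdd ((n : ℝ) * Real.pi) := by
      rw [show ((n : ℝ) * Real.pi) = n • Real.pi by simp [zsmul_eq_mul], ofAdd_zsmul]
    exact Prod.ext rfl h2
  -- kernel computation
  have hker : torusHom.ker =
      Subgroup.zpowers ((negOneCircle, Multiplicative.ofAdd Real.pi) :
        Circle × Multiplicative ℝ) := by
    ext p
    obtain ⟨z, t⟩ := p
    constructor
    · intro hp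
      have h1 : z * Circle.exp t.toAdd = 1 := congrArg Prod.fst hp
      have h2 : Circle.exp (2 * t.toAdd) = 1 := congrArg Prod.snd hp
      obtain ⟨n, hn⟩ := Circle.exp_eq_one.mp h2
      have ht : t.toAdd = n * Real.pi := by
        have : (2 : ℝ) ≠ 0 := two_ne_zero
        nlinarith [hn]
      refine ⟨n, ?_⟩
      show ((negOneCircle, Multiplicative.ofAdd Real.pi) : Circle × Multiplicative ℝ) ^ n = (z, t)
      rw [hg n]
      have hz : z = negOneCircle ^ n := by
        have : Circle.exp t.toAdd = negOneCircle ^ n := by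
          rw [ht, circle_exp_int_mul, circle_exp_pi]
        have hz' : z = (negOneCircle ^ n)⁻¹ := by
          rw [← this]; exact eq_inv_of_mul_eq_one_left h1
        rw [hz', ← inv_zpow, negOneCircle_inv]
      refine Prod.ext hz.symm ?_
      show Multiplicative.ofAdd ((n : ℝ) * Real.pi) = t
      rw [← ht, ofAdd_toAdd]
    · rintro ⟨n, hn⟩
      simp only at hn
      rw [← hn, hg n]
      have hsq : negOneCircle * negOneCircle = 1 := by
        ext
        push_cast [coe_negOneCircle]
        norm_num
      have h1 : Circle.exp ((n : ℝ) * Real.pi) = negOneCircle ^ n := by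
        rw [circle_exp_int_mul, circle_exp_pi]
      have h2 : Circle.exp (2 * ((n : ℝ) * Real.pi)) = 1 := by
        rw [show (2 : ℝ) * ((n : ℝ) * Real.pi) = (n : ℝ) * (2 * Real.pi) by ring]
        exact_mod_cast Circle.exp_int_mul_two_pi n
      show (negOneCircle ^ n * Circle.exp ((n : ℝ) * Real.pi),
        Circle.exp (2 * ((n : ℝ) * Real.pi))) = 1
      rw [h1, h2, ← mul_zpow, hsq, one_zpow]
      rfl
  have hsurj : Function.Surjective torusHom := by
    rintro ⟨a, b⟩
    refine ⟨(a * (Circle.exp (Complex.arg b / 2))⁻¹,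
      Multiplicative.ofAdd (Complex.arg b / 2)), ?_⟩
    show (a * (Circle.exp (Complex.arg b / 2))⁻¹ * Circle.exp (Complex.arg b / 2),
      Circle.exp (2 * (Complex.arg b / 2))) = (a, b)
    rw [inv_mul_cancel_right, show (2 : ℝ) * (Complex.arg b / 2) = Complex.arg b by ring,
      Circle.exp_arg]
  have hcont : Continuous torusHom := by
    apply Continuous.prodMk
    · exact (continuous_fst.mul (Circle.exp.continuous.comp
        (continuous_toAdd.comp continuous_snd)))
    · exact Circle.exp.continuous.comp
        ((continuous_const.mul (continuous_toAdd.comp continuous_snd)))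
  haveI : SigmaCompactSpace (Multiplicative ℝ) := (inferInstance : SigmaCompactSpace ℝ)
  have hopen : IsOpenMap torusHom :=
    torusHom.isOpenMap_of_sigmaCompact hsurj hcont
  rw [← hker]
  let e := QuotientGroup.quotientKerEquivOfSurjective torusHom hsurj
  have hq := QuotientGroup.isQuotientMap_mk torusHom.ker
  have hcomp : ∀ x, e (QuotientGroup.mk x) = torusHom x := fun x => rfl
  have hce : Continuous e := by
    rw [hq.continuous_iff]
    exact hcont
  have hoe : IsOpenMap e := by
    intro U hU
    have : (e : _ → Circle × Circle) '' U
        = torusHom '' ((QuotientGroup.mk : _ → _) ⁻¹' U) := by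
      ext y
      constructor
      · rintro ⟨q, hqU, rfl⟩
        obtain ⟨x, rfl⟩ := QuotientGroup.mk_surjective q
        exact ⟨x, hqU, rfl⟩
      · rintro ⟨x, hx, rfl⟩
        exact ⟨QuotientGroup.mk x, hx, rfl⟩
    rw [this]
    exact hopen _ (hU.preimage hq.continuous)
  exact ⟨Equiv.toHomeomorphOfContinuousOpen e.toEquiv hce hoe⟩
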